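/- Exterior angle theorem (Euclid I.16): in a real inner product space, if d lies so that Sbtw ℝ b c d (d is on segment bc extended beyond c) and a, b, c are not collinear, then the exterior angle ∠ a c d is strictly greater than the interior opposite angle ∠ b a c. -/

import Mathlib

open EuclideanGeometry Real

/-- Exterior angle theorem (Euclid I.16). -/
theorem exterior_angle_lt {V : Type*} [NormedAddCommGroup V] [InnerProductSpace ℝ V]
    {a b c d : V} (hd : Sbtw ℝ b c d) (hnc : ¬ Collinear ℝ ({a, b, c} : Set V)) :
    ∠ b a c < ∠ a c d := by
  have hpi : ∠ b c d = π := hd.angle₁₂₃_eq_pi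
  have h1 : ∠ a c b + ∠ a c d = π := angle_add_angle_eq_pi_of_angle_eq_pi a hpi
  have hab : a ≠ b := ne₁₂_of_not_collinear hnc
  have hcb : c ≠ b := (ne₂₃_of_not_collinear hnc).symm
  have h2 : ∠ b a c + ∠ a c b + ∠ c b a = π :=
    angle_add_angle_add_angle_eq_pi c hab
  have hnc' : ¬ Collinear ℝ ({c, b, a} : Set V) := by
    rwa [show ({c, b, a} : Set V) = {a, b, c} by ext x; simp; tauto]
  have h3 : 0 < ∠ c b a := angle_pos_of_not_collinear hnc'
  linarith
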